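/- Let M be a von Neumann algebra on a complex Hilbert space H, let J be a conjugation of H with J γ₀ = γ₀ for a fixed γ₀ ∈ H, and assume J M J ⊆ M'. If a ∈ M satisfies J(a γ₀) = (star a) γ₀, then a commutes with the vector functional of γ₀: for every x ∈ M, ⟪γ₀, a (x γ₀)⟫ = ⟪γ₀, x (a γ₀)⟫. (Lemma 6.8(ii): j(a)γ₀ = a*γ₀ implies ρ₀ a = a ρ₀ for ρ₀ = E(γ₀).) -/

import Mathlib

open scoped ComplexConjugate

private lemma Jinner {H : Type*} [NormedAddCommGroup H] [InnerProductSpace ℂ H]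
    (J : H → H)
    (hJadd : ∀ ξ η : H, J (ξ + η) = J ξ + J η)
    (hJsmul : ∀ (c : ℂ) (ξ : H), J (c • ξ) = (starRingEnd ℂ c) • J ξ)
    (hJnorm : ∀ ξ : H, ‖J ξ‖ = ‖ξ‖) (ξ η : H) :
    (inner ℂ (J ξ) (J η) : ℂ) = inner ℂ η ξ := by
  have hJneg : ∀ ζ : H, J (-ζ) = -(J ζ) := by
    intro ζ
    have := hJsmul (-1) ζ
    simpa using this
  have hJsub : ∀ ζ₁ ζ₂ : H, J (ζ₁ - ζ₂) = J ζ₁ - J ζ₂ := by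
    intro ζ₁ ζ₂
    rw [sub_eq_add_neg, hJadd, hJneg, sub_eq_add_neg]
  have hI : ∀ ζ : H, J (Complex.I • ζ) = -(Complex.I • J ζ) := by
    intro ζ
    rw [hJsmul]
    simp [Complex.conj_I, neg_smul]
  have h1 : ‖J ξ + J η‖ = ‖ξ + η‖ := by rw [← hJadd, hJnorm]
  have h2 : ‖J ξ - J η‖ = ‖ξ - η‖ := by rw [← hJsub, hJnorm]
  have h3 : ‖J ξ - Complex.I • J η‖ = ‖ξ + Complex.I • η‖ := by
    rw [← hJnorm (ξ + Complex.I • η), hJadd, hI, ← sub_eq_add_neg]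
  have h4 : ‖J ξ + Complex.I • J η‖ = ‖ξ - Complex.I • η‖ := by
    rw [← hJnorm (ξ - Complex.I • η), hJsub, hI, sub_neg_eq_add]
  have e1 := inner_eq_sum_norm_sq_div_four (𝕜 := ℂ) (J ξ) (J η)
  have e2 := inner_eq_sum_norm_sq_div_four (𝕜 := ℂ) ξ η
  simp only [RCLike.I_to_complex] at e1 e2
  rw [← inner_conj_symm η ξ, e2]
  rw [e1, h1, h2, h3, h4]
  simp only [map_div₀, map_add, map_sub, map_mul, map_pow, Complex.conj_ofReal, RCLike.conj_ofReal,
    Complex.conj_I, map_ofNat]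
  ring

/-- Lemma 6.8(ii), first part: if a ∈ M satisfies j(a)γ₀ = a*γ₀, then a
commutes with the vector functional ρ₀ = E(γ₀): ρ₀(a x) = ρ₀(x a) for x ∈ M. -/
theorem stmt12 {H : Type*} [NormedAddCommGroup H] [InnerProductSpace ℂ H]
    [CompleteSpace H]
    (M : VonNeumannAlgebra H) (γ₀ : H) (J : H → H)
    (hJadd : ∀ ξ η : H, J (ξ + η) = J ξ + J η)
    (hJsmul : ∀ (c : ℂ) (ξ : H), J (c • ξ) = (starRingEnd ℂ c) • J ξ)
    (hJnorm : ∀ ξ : H, ‖J ξ‖ = ‖ξ‖)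
    (hJinv : ∀ ξ : H, J (J ξ) = ξ)
    (hJγ₀ : J γ₀ = γ₀)
    (j : (H →L[ℂ] H) → (H →L[ℂ] H))
    (hj : ∀ (a : H →L[ℂ] H) (ξ : H), j a ξ = J (a (J ξ)))
    (hjM : ∀ a : H →L[ℂ] H, a ∈ M → j a ∈ M.commutant)
    (a : H →L[ℂ] H) (ha : a ∈ M)
    (haJ : J (a γ₀) = (star a) γ₀) :
    ∀ x : H →L[ℂ] H, x ∈ M →
      (inner ℂ γ₀ (a (x γ₀)) : ℂ) = inner ℂ γ₀ (x (a γ₀)) := by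
  intro x hx
  -- j(a*) ∈ M', and j(a*)γ₀ = J(a* γ₀) = a γ₀
  have hstar : star a ∈ M := star_mem ha
  have hjas : j (star a) ∈ M.commutant := hjM (star a) hstar
  have hcomm : x * j (star a) = j (star a) * x :=
    VonNeumannAlgebra.mem_commutant_iff.mp hjas x hx
  have hjas_γ : j (star a) γ₀ = a γ₀ := by
    rw [hj, hJγ₀, ← haJ, hJinv]
  have hxa : x (a γ₀) = J ((star a) (J (x γ₀))) := by
    have : x (j (star a) γ₀) = j (star a) (x γ₀) := by
      have := congrArg (fun T : H →L[ℂ] H => T γ₀) hcomm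
      simpa using this
    rw [hjas_γ] at this
    rw [this, hj]
  rw [hxa]
  have haγ : a γ₀ = J ((star a) γ₀) := by rw [← haJ, hJinv]
  calc (inner ℂ γ₀ (a (x γ₀)) : ℂ)
      = inner ℂ ((star a) γ₀) (x γ₀) := by
        rw [← ContinuousLinearMap.adjoint_inner_left]
        simp [ContinuousLinearMap.star_eq_adjoint]
    _ = inner ℂ (J (x γ₀)) (J ((star a) γ₀)) := by
        rw [Jinner J hJadd hJsmul hJnorm]
    _ = inner ℂ (J (x γ₀)) (a γ₀) := by rw [← haγ]
    _ = inner ℂ ((star a) (J (x γ₀))) γ₀ := by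
        rw [ContinuousLinearMap.star_eq_adjoint, ContinuousLinearMap.adjoint_inner_left]
    _ = inner ℂ (J γ₀) (J ((star a) (J (x γ₀)))) := by
        rw [Jinner J hJadd hJsmul hJnorm]
    _ = inner ℂ γ₀ (J ((star a) (J (x γ₀)))) := by rw [hJγ₀]
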